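/- Let $\mathbf{d} = (d_1,\dots,d_n)$ be nonnegative integers and let $\mathcal{T}_{\mathbf{d}}$ be the set of two-row rectangular semistandard Young tableaux with entries in $\{1,\dots,n\}$ containing at most $d_i$ copies of $i$ for each $i$. Then the number of sequences that arise as the first row of a tableau in $\mathcal{T}_{\mathbf{d}}$ equals the number of sequences that arise as the second row of a tableau in $\mathcal{T}_{\mathbf{d}}$. -/

import Mathlib

/-- `a` and `b` are the first and second rows of a two-row rectangular
semistandard Young tableau with entries in `Fin n` (entries labelled
`0,…,n-1`) containing at most `d i` copies of each entry `i`. -/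
def IsTwoRowSSYT {n : ℕ} (d : Fin n → ℕ) (a b : List (Fin n)) : Prop :=
  a.length = b.length ∧
  List.Pairwise (· ≤ ·) a ∧ List.Pairwise (· ≤ ·) b ∧
  (∀ (m : ℕ) (ha : m < a.length) (hb : m < b.length), a.get ⟨m, ha⟩ < b.get ⟨m, hb⟩) ∧
  ∀ i : Fin n, a.count i + b.count i ≤ d i

namespace TwoRowAux

/-- `A` is a prefix-count path for multisets over `{0,…,n-1}`. -/
def IsPath (n : ℕ) (A : ℕ → ℕ) : Prop :=
  A 0 = 0 ∧ (∀ i, A i ≤ A (i + 1)) ∧ ∀ i, n ≤ i → A (i + 1) = A i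

/-- `A, B` are the prefix-count paths of the two rows of a tableau bounded by `D`. -/
def Valid (n : ℕ) (D A B : ℕ → ℕ) : Prop :=
  IsPath n A ∧ IsPath n B ∧ (∀ i, B (i + 1) ≤ A i) ∧
    (∀ i, A (i + 1) + B (i + 1) ≤ A i + B i + D i) ∧ A n = B n

theorem IsPath.mono {n : ℕ} {A : ℕ → ℕ} (h : IsPath n A) : Monotone A :=
  monotone_nat_of_le_succ h.2.1

theorem IsPath.stat {n : ℕ} {A : ℕ → ℕ} (h : IsPath n A) : ∀ i, n ≤ i → A i = A n := by
  intro i hi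
  induction i with
  | zero => obtain rfl : n = 0 := by omega
            rfl
  | succ k ih =>
    rcases Nat.lt_or_ge n (k + 1) with hk | hk
    · rw [h.2.2 k (by omega), ih (by omega)]
    · obtain rfl : n = k + 1 := by omega
      rfl

theorem IsPath.le_top {n : ℕ} {A : ℕ → ℕ} (h : IsPath n A) (i : ℕ) : A i ≤ A n := by
  rcases Nat.le_total i n with hi | hi
  · exact h.mono hi
  · exact (h.stat i hi).le

section Greedy

variable {n : ℕ} {D A B A₀ B₀ : ℕ → ℕ}

/-- Greedy maximal second-row path for a given first-row path `A`. -/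
def Bg (D A : ℕ → ℕ) : ℕ → ℕ
  | 0 => 0
  | i + 1 => min (A i) ((Bg D A i + D i + A i) - A (i + 1))

theorem bg_le_A (hA : IsPath n A) : ∀ i, Bg D A i ≤ A i
  | 0 => by simp [Bg, hA.1]
  | i + 1 => le_trans (min_le_left _ _) (hA.2.1 i)

theorem bg_col (i : ℕ) : Bg D A (i + 1) ≤ A i := min_le_left _ _

theorem bg_mono (hA : IsPath n A) (hαd : ∀ i, A (i + 1) ≤ A i + D i) (i : ℕ) :
    Bg D A i ≤ Bg D A (i + 1) := by
  refine le_min (bg_le_A hA i) ?_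
  have := hαd i
  omega

theorem bg_content (hA : IsPath n A) (hαd : ∀ i, A (i + 1) ≤ A i + D i) (i : ℕ) :
    A (i + 1) + Bg D A (i + 1) ≤ A i + Bg D A i + D i := by
  have h1 : Bg D A (i + 1) ≤ (Bg D A i + D i + A i) - A (i + 1) := min_le_right _ _
  have := hαd i
  omega

theorem bg_stat (hA : IsPath n A) (hD : ∀ i, n ≤ i → D i = 0) (i : ℕ) (hi : n ≤ i) :
    Bg D A (i + 1) = Bg D A i := by
  have h1 : A (i + 1) = A i := hA.2.2 i hi
  have h2 : D i = 0 := hD i hi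
  have h3 : Bg D A i ≤ A i := bg_le_A hA i
  show min (A i) ((Bg D A i + D i + A i) - A (i + 1)) = Bg D A i
  omega

theorem bg_max (hcol : ∀ i, B₀ (i + 1) ≤ A i)
    (hcont : ∀ i, A (i + 1) + B₀ (i + 1) ≤ A i + B₀ i + D i) (hB0 : B₀ 0 = 0) :
    ∀ i, B₀ i ≤ Bg D A i
  | 0 => by simp [Bg, hB0]
  | i + 1 => by
    have ih := bg_max hcol hcont hB0 i
    refine le_min (hcol i) ?_
    have := hcont i
    omega

theorem valid_bg (hD : ∀ i, n ≤ i → D i = 0) (h : Valid n D A B₀) :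
    Valid n D A (Bg D A) := by
  obtain ⟨hA, hB₀, hcol, hcont, htop⟩ := h
  have hαd : ∀ i, A (i + 1) ≤ A i + D i := fun i => by
    have h1 := hcont i
    have h2 := hB₀.2.1 i
    omega
  have hmax := bg_max (D := D) hcol hcont hB₀.1
  have htop' : Bg D A n = A n := by
    have h1 : A n = B₀ n := htop
    have h2 := hmax n
    have h3 : Bg D A n ≤ A n := bg_le_A hA n
    omega
  exact ⟨hA, ⟨rfl, bg_mono hA hαd, fun i hi => bg_stat hA hD i hi⟩,
    bg_col, bg_content hA hαd, htop'.symm⟩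

/-- Auxiliary downward recursion for the greedy minimal first-row path. -/
def AgAux (n : ℕ) (D B : ℕ → ℕ) : ℕ → ℕ
  | 0 => B n
  | k + 1 =>
    if k < n then
      max (B (n - k)) ((AgAux n D B k + B (n - k)) - (B (n - k - 1) + D (n - k - 1)))
    else AgAux n D B k

/-- Greedy minimal first-row path for a given second-row path `B`. -/
def Ag (n : ℕ) (D B : ℕ → ℕ) (i : ℕ) : ℕ := AgAux n D B (n - i)

theorem ag_ge (i : ℕ) (hi : n ≤ i) : Ag n D B i = B n := by
  unfold Ag
  obtain h : n - i = 0 := by omega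
  rw [h]
  rfl

theorem ag_lt (i : ℕ) (hi : i < n) :
    Ag n D B i = max (B (i + 1)) ((Ag n D B (i + 1) + B (i + 1)) - (B i + D i)) := by
  have h1 : n - i = (n - (i + 1)) + 1 := by omega
  show AgAux n D B (n - i) = _
  rw [h1]
  show (if n - (i+1) < n then
      max (B (n - (n - (i+1)))) ((AgAux n D B (n - (i+1)) + B (n - (n - (i+1)))) -
        (B (n - (n - (i+1)) - 1) + D (n - (n - (i+1)) - 1)))
    else AgAux n D B (n - (i+1))) = _
  have h2 : n - (n - (i + 1)) = i + 1 := by omega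
  have h3 : n - (n - (i + 1)) - 1 = i := by omega
  rw [if_pos (by omega), h3, h2]
  rfl

theorem ag_ge_Bsucc (hB : IsPath n B) (i : ℕ) : B (i + 1) ≤ Ag n D B i := by
  rcases Nat.lt_or_ge i n with hi | hi
  · rw [ag_lt i hi]; exact le_max_left _ _
  · rw [ag_ge i hi]
    exact (hB.stat (i + 1) (by omega)).le

theorem ag_ge_B (hB : IsPath n B) (i : ℕ) : B i ≤ Ag n D B i :=
  le_trans (hB.2.1 i) (ag_ge_Bsucc hB i)

theorem ag_mono (hB : IsPath n B) (hβd : ∀ i, B (i + 1) ≤ B i + D i) (i : ℕ) :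
    Ag n D B i ≤ Ag n D B (i + 1) := by
  rcases Nat.lt_or_ge i n with hi | hi
  · rw [ag_lt i hi]
    have h1 : B (i + 1) ≤ Ag n D B (i + 1) := ag_ge_B hB (i + 1)
    have h2 := hβd i
    omega
  · rw [ag_ge i hi, ag_ge (i + 1) (by omega)]

theorem ag_content (hB : IsPath n B) (i : ℕ) :
    Ag n D B (i + 1) + B (i + 1) ≤ Ag n D B i + B i + D i := by
  rcases Nat.lt_or_ge i n with hi | hi
  · rw [ag_lt i hi]
    have h := le_max_right (B (i + 1)) ((Ag n D B (i + 1) + B (i + 1)) - (B i + D i))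
    omega
  · rw [ag_ge i hi, ag_ge (i + 1) (by omega)]
    have h1 : B (i + 1) = B n := hB.stat (i + 1) (by omega)
    have h2 : B i = B n := hB.stat i hi
    omega

theorem ag_col (hB : IsPath n B) (i : ℕ) : B (i + 1) ≤ Ag n D B i := ag_ge_Bsucc hB i

theorem ag_min (h : Valid n D A₀ B) : ∀ i, Ag n D B i ≤ A₀ i := by
  obtain ⟨hA₀, hB, hcol, hcont, htop⟩ := h
  have key : ∀ k, Ag n D B (n - k) ≤ A₀ (n - k) := by
    intro k
    induction k with
    | zero =>
      simp only [Nat.sub_zero]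
      rw [ag_ge n (le_refl n)]
      omega
    | succ k ih =>
      rcases Nat.lt_or_ge k n with hk | hk
      · have hi : n - (k + 1) < n := by omega
        have hsucc : n - (k + 1) + 1 = n - k := by omega
        rw [ag_lt _ hi]
        have h1 := hcol (n - (k + 1))
        have h2 := hcont (n - (k + 1))
        rw [hsucc] at *
        omega
      · have h : n - (k + 1) = n - k := by omega
        rw [h]; exact ih
  intro i
  rcases Nat.le_total i n with hi | hi
  · have := key (n - i)
    rwa [Nat.sub_sub_self hi] at this
  · rw [ag_ge i hi]
    have := hA₀.stat i hi
    omega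

theorem ag_top : Ag n D B n = B n := ag_ge n (le_refl n)

theorem ag_zero (h : Valid n D A₀ B) : Ag n D B 0 = 0 := by
  have h1 := ag_min h 0
  have h2 := h.1.1
  omega

theorem ag_stat (i : ℕ) (hi : n ≤ i) : Ag n D B (i + 1) = Ag n D B i := by
  rw [ag_ge i hi, ag_ge (i + 1) (by omega)]

theorem valid_ag (h : Valid n D A₀ B) : Valid n D (Ag n D B) B := by
  have hB := h.2.1
  have hβd : ∀ i, B (i + 1) ≤ B i + D i := fun i => by
    have h1 := h.2.2.2.1 i
    have h2 := h.1.2.1 i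
    omega
  exact ⟨⟨ag_zero h, ag_mono hB hβd, fun i hi => ag_stat i hi⟩, hB,
    ag_col hB, ag_content hB, ag_top⟩

theorem ag_bg (hD : ∀ i, n ≤ i → D i = 0) (h : Valid n D A B₀) :
    ∀ i, Ag n D (Bg D A) i = A i := by
  obtain hV := valid_bg hD h
  set B := Bg D A with hBdef
  have hA := hV.1
  have hB := hV.2.1
  have htop : A n = B n := hV.2.2.2.2
  have hαd : ∀ i, A (i + 1) ≤ A i + D i := fun i => by
    have h1 := hV.2.2.2.1 i
    have h2 := hB.2.1 i
    omega
  have hmin := ag_min hV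
  have key : ∀ k, Ag n D B (n - k) = A (n - k) := by
    intro k
    induction k with
    | zero => simpa using ag_top.trans htop.symm
    | succ k ih =>
      rcases Nat.lt_or_ge k n with hk | hk
      · set i := n - (k + 1) with hidef
        have hi : i < n := by omega
        have hsucc : i + 1 = n - k := by omega
        have ih' : Ag n D B (i + 1) = A (i + 1) := by rw [hsucc]; exact ih
        have hle : Ag n D B i ≤ A i := hmin i
        rw [ag_lt i hi, ih']
        have hBsucc : B (i + 1) = min (A i) ((B i + D i + A i) - A (i + 1)) := rfl
        have h2 := hαd i
        have hBle : B i ≤ A i := bg_le_A hA i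
        -- show max (B (i+1)) ((A (i+1) + B (i+1)) - (B i + D i)) = A i
        rcases Nat.le_total (A i) ((B i + D i + A i) - A (i + 1)) with hc | hc
        · have : B (i + 1) = A i := by omega
          omega
        · have hBs : B (i + 1) = (B i + D i + A i) - A (i + 1) := by omega
          have : (A (i + 1) + B (i + 1)) - (B i + D i) = A i := by omega
          omega
      · have heq : n - (k + 1) = n - k := by omega
        rw [heq]; exact ih
  intro i
  rcases Nat.le_total i n with hi | hi
  · have := key (n - i)
    rwa [Nat.sub_sub_self hi] at this
  · rw [ag_ge i hi, ← htop]
    exact (hA.stat i hi).symm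

theorem bg_ag (hD : ∀ i, n ≤ i → D i = 0) (h : Valid n D A₀ B) :
    ∀ i, Bg D (Ag n D B) i = B i := by
  obtain hV := valid_ag h
  set A := Ag n D B with hAdef
  have hA := hV.1
  have hB := hV.2.1
  have hmax : ∀ i, B i ≤ Bg D A i := bg_max hV.2.2.1 hV.2.2.2.1 hB.1
  intro i
  induction i with
  | zero => simpa [Bg] using hB.1.symm
  | succ i ih =>
    have hup := hmax (i + 1)
    have hstep : Bg D A (i + 1) = min (A i) ((B i + D i + A i) - A (i + 1)) := by
      show min (A i) ((Bg D A i + D i + A i) - A (i + 1)) = _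
      rw [ih]
    refine le_antisymm ?_ hup
    rw [hstep]
    rcases Nat.lt_or_ge i n with hi | hi
    · have hAi : A i = max (B (i + 1)) ((A (i + 1) + B (i + 1)) - (B i + D i)) := ag_lt i hi
      rcases Nat.le_total ((A (i + 1) + B (i + 1)) - (B i + D i)) (B (i + 1)) with hc | hc
      · -- A i = B (i+1)
        have : A i = B (i + 1) := by omega
        omega
      · rcases Nat.le_total (B i + D i) (A (i + 1) + B (i + 1)) with hs | hs
        · have : (B i + D i + A i) - A (i + 1) = B (i + 1) := by omega
          omega
        · -- truncation: u = 0, so B (i+1) = 0 and A i = 0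
          have : A i = 0 := by omega
          omega
    · have h1 : A (i + 1) = A i := hA.2.2 i hi
      have h2 : D i = 0 := hD i hi
      have h3 : B (i + 1) = B i := hB.2.2 i hi
      have h4 : B i ≤ A i := by
        have := hV.2.2.1 i
        omega
      omega

end Greedy

section Lists

variable {n : ℕ}

/-- Number of entries of `l` below `i`. -/
def cnt (l : List (Fin n)) (i : ℕ) : ℕ := l.countP (fun x : Fin n => decide ((x : ℕ) < i))

theorem cnt_zero (l : List (Fin n)) : cnt l 0 = 0 := by
  simp [cnt]

theorem cnt_ge (l : List (Fin n)) (i : ℕ) (hi : n ≤ i) : cnt l i = l.length := by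
  rw [cnt, List.countP_eq_length]
  intro x _
  simpa using lt_of_lt_of_le x.isLt hi

theorem cnt_succ (l : List (Fin n)) (i : ℕ) (hi : i < n) :
    cnt l (i + 1) = cnt l i + l.count ⟨i, hi⟩ := by
  induction l with
  | nil => rfl
  | cons x l ih =>
    simp only [cnt, List.countP_cons, List.count_cons] at ih ⊢
    have hxi : (x = (⟨i, hi⟩ : Fin n)) ↔ ((x : ℕ) = i) := by
      simp [Fin.ext_iff]
    have hxi' : ((⟨i, hi⟩ : Fin n) = x) ↔ ((x : ℕ) = i) := by
      simp [Fin.ext_iff, eq_comm]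
    simp only [decide_eq_true_eq, beq_iff_eq, hxi, hxi']
    rw [ih]
    split_ifs <;> omega

theorem cnt_succ_ge (l : List (Fin n)) (i : ℕ) (hi : n ≤ i) : cnt l (i + 1) = cnt l i := by
  rw [cnt_ge l i hi, cnt_ge l (i + 1) (by omega)]

theorem cnt_mono (l : List (Fin n)) (i : ℕ) : cnt l i ≤ cnt l (i + 1) := by
  rcases Nat.lt_or_ge i n with hi | hi
  · rw [cnt_succ l i hi]; omega
  · rw [cnt_succ_ge l i hi]

theorem cnt_isPath (l : List (Fin n)) : IsPath n (cnt l) :=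
  ⟨cnt_zero l, cnt_mono l, fun i hi => cnt_succ_ge l i hi⟩

theorem cnt_pos_of_mem {l : List (Fin n)} {y : Fin n} (hy : y ∈ l) {i : ℕ} (h : (y : ℕ) < i) :
    0 < cnt l i := by
  rw [cnt, List.countP_pos_iff]
  exact ⟨y, hy, by simpa using h⟩

theorem cnt_eq_zero {l : List (Fin n)} {i : ℕ} (h : ∀ y ∈ l, ¬ ((y : ℕ) < i)) : cnt l i = 0 := by
  rw [cnt, List.countP_eq_zero]
  intro y hy
  simpa using h y hy

/-- The column condition in terms of prefix counts. -/
theorem forall₂_iff_cnt {a b : List (Fin n)} (ha : a.Pairwise (· ≤ ·)) (hb : b.Pairwise (· ≤ ·))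
    (hlen : a.length = b.length) :
    List.Forall₂ (· < ·) a b ↔ ∀ i : ℕ, cnt b (i + 1) ≤ cnt a i := by
  constructor
  · intro h
    induction h with
    | nil => intro i; simp [cnt]
    | @cons x y a b hxy hab ih =>
      intro i
      have iha := ih (List.pairwise_cons.mp ha).2 (List.pairwise_cons.mp hb).2
        (by simpa using hlen) i
      have hxy' : (x : ℕ) < (y : ℕ) := Fin.lt_iff_val_lt_val.mp hxy
      simp only [cnt, List.countP_cons, decide_eq_true_eq] at iha ⊢
      split_ifs <;> omega
  · induction a generalizing b with
    | nil =>
      intro _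
      obtain rfl : b = [] := by
        cases b with
        | nil => rfl
        | cons y b => simp at hlen
      exact List.Forall₂.nil
    | cons x a ih =>
      intro h
      cases b with
      | nil => simp at hlen
      | cons y b =>
        have hxy : x < y := by
          by_contra hcon
          push_neg at hcon
          have h1 : 0 < cnt (y :: b) ((y : ℕ) + 1) :=
            cnt_pos_of_mem ((List.mem_cons_self (a := y) (l := b))) (by omega)
          have h2 : cnt (x :: a) (y : ℕ) = 0 := by
            apply cnt_eq_zero
            intro z hz
            have hxz : x ≤ z := by
              rcases List.mem_cons.mp hz with rfl | hz
              · exact le_refl z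
              · exact List.rel_of_pairwise_cons ha hz
            have := Fin.le_iff_val_le_val.mp hcon
            have := Fin.le_iff_val_le_val.mp hxz
            omega
          have := h (y : ℕ)
          omega
        refine List.Forall₂.cons hxy (ih (List.pairwise_cons.mp ha).2 (List.pairwise_cons.mp hb).2
          (by simpa using hlen) ?_)
        intro i
        have hi := h i
        have hxv : (x : ℕ) < (y : ℕ) := Fin.lt_iff_val_lt_val.mp hxy
        simp only [cnt, List.countP_cons, decide_eq_true_eq] at hi ⊢
        rcases Nat.lt_or_ge i (y : ℕ) with hc | hc
        · have hzero : b.countP (fun z : Fin n => decide ((z : ℕ) < i + 1)) = 0 := by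
            rw [List.countP_eq_zero]
            intro z hz
            have hyz : y ≤ z := List.rel_of_pairwise_cons hb hz
            have := Fin.le_iff_val_le_val.mp hyz
            simp only [decide_eq_true_eq]
            omega
          rw [hzero]
          omega
        · rw [if_pos (by omega : (y : ℕ) < i + 1), if_pos (by omega : (x : ℕ) < i)] at hi
          omega

/-- Decode a path into a sorted list with `A (j+1) - A j` copies of `j`. -/
def decode (n : ℕ) (A : ℕ → ℕ) : List (Fin n) :=
  Multiset.sort (∑ j : Fin n, (A ((j : ℕ) + 1) - A (j : ℕ)) • ({j} : Multiset (Fin n))) (· ≤ ·)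

theorem decode_sorted (A : ℕ → ℕ) : (decode n A).Pairwise (· ≤ ·) :=
  Multiset.pairwise_sort _ _

theorem count_decode (A : ℕ → ℕ) (j : Fin n) :
    (decode n A).count j = A ((j : ℕ) + 1) - A (j : ℕ) := by
  have h1 : ((decode n A : List (Fin n)) : Multiset (Fin n)) =
      ∑ j : Fin n, (A ((j : ℕ) + 1) - A (j : ℕ)) • ({j} : Multiset (Fin n)) :=
    Multiset.sort_eq _ _
  have h2 : (decode n A).count j = Multiset.count j
      (∑ k : Fin n, (A ((k : ℕ) + 1) - A (k : ℕ)) • ({k} : Multiset (Fin n))) := by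
    rw [← h1, Multiset.coe_count]
  rw [h2, Multiset.count_sum']
  rw [Finset.sum_eq_single j]
  · simp
  · intro k _ hk
    simp [Multiset.count_singleton, hk, Ne.symm hk]
  · simp

theorem cnt_decode {A : ℕ → ℕ} (hA : IsPath n A) : ∀ i, cnt (decode n A) i = A i := by
  intro i
  induction i with
  | zero => rw [cnt_zero, hA.1]
  | succ i ih =>
    rcases Nat.lt_or_ge i n with hi | hi
    · rw [cnt_succ _ i hi, ih, count_decode A ⟨i, hi⟩]
      have := hA.2.1 i
      simp only [Fin.val_mk]
      omega
    · rw [cnt_succ_ge _ i hi, ih, hA.2.2 i hi]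

theorem decode_cnt {a : List (Fin n)} (ha : a.Pairwise (· ≤ ·)) : decode n (cnt a) = a := by
  have hperm : ((decode n (cnt a) : List (Fin n)) : Multiset (Fin n)) = (a : Multiset (Fin n)) := by
    have h1 : ((decode n (cnt a) : List (Fin n)) : Multiset (Fin n)) =
        ∑ j : Fin n, (cnt a ((j : ℕ) + 1) - cnt a (j : ℕ)) • ({j} : Multiset (Fin n)) :=
      Multiset.sort_eq _ _
    rw [h1]
    ext k
    rw [Multiset.count_sum', Multiset.coe_count, Finset.sum_eq_single k]
    · have := cnt_succ a (k : ℕ) k.isLt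
      simp only [Multiset.count_nsmul, Multiset.count_singleton, if_true, mul_one,
        Fin.eta] at *
      omega
    · intro j _ hj
      simp [Multiset.count_singleton, hj, Ne.symm hj]
    · simp
  exact List.Perm.eq_of_pairwise' (decode_sorted _) ha (Multiset.coe_eq_coe.mp hperm)

/-- Padded capacity function. -/
def Dpad (n : ℕ) (d : Fin n → ℕ) (i : ℕ) : ℕ := if h : i < n then d ⟨i, h⟩ else 0

theorem dpad_zero (d : Fin n → ℕ) (i : ℕ) (hi : n ≤ i) : Dpad n d i = 0 :=
  dif_neg (by omega)

theorem isTwoRow_iff {d : Fin n → ℕ} {a b : List (Fin n)} (ha : a.Pairwise (· ≤ ·))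
    (hb : b.Pairwise (· ≤ ·)) :
    IsTwoRowSSYT d a b ↔ Valid n (Dpad n d) (cnt a) (cnt b) := by
  have hlen_iff : a.length = b.length ↔ cnt a n = cnt b n := by
    rw [cnt_ge a n (le_refl n), cnt_ge b n (le_refl n)]
  constructor
  · rintro ⟨hlen, -, -, hget, hcount⟩
    have hcol : ∀ i : ℕ, cnt b (i + 1) ≤ cnt a i := by
      rw [← forall₂_iff_cnt ha hb hlen]
      exact List.forall₂_iff_get.mpr ⟨hlen, hget⟩
    refine ⟨cnt_isPath a, cnt_isPath b, hcol, ?_, hlen_iff.mp hlen⟩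
    intro i
    rcases Nat.lt_or_ge i n with hi | hi
    · rw [cnt_succ a i hi, cnt_succ b i hi]
      have := hcount ⟨i, hi⟩
      have hD : Dpad n d i = d ⟨i, hi⟩ := dif_pos hi
      omega
    · rw [cnt_succ_ge a i hi, cnt_succ_ge b i hi]
      omega
  · rintro ⟨-, -, hcol, hcont, htop⟩
    have hlen : a.length = b.length := hlen_iff.mpr htop
    have hget := (List.forall₂_iff_get.mp ((forall₂_iff_cnt ha hb hlen).mpr hcol)).2
    refine ⟨hlen, ha, hb, hget, ?_⟩
    intro i
    have h := hcont (i : ℕ)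
    rw [cnt_succ a (i : ℕ) i.isLt, cnt_succ b (i : ℕ) i.isLt] at h
    have hD : Dpad n d (i : ℕ) = d i := by
      rw [Dpad, dif_pos i.isLt, Fin.eta]
    simp only [Fin.eta] at h
    omega

variable {d : Fin n → ℕ}

/-- The canonical (lexicographically least) second row for a given first row. -/
def phi (d : Fin n → ℕ) (a : List (Fin n)) : List (Fin n) :=
  decode n (Bg (Dpad n d) (cnt a))

/-- The canonical (lexicographically greatest) first row for a given second row. -/
def psi (d : Fin n → ℕ) (b : List (Fin n)) : List (Fin n) :=
  decode n (Ag n (Dpad n d) (cnt b))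

theorem phi_spec {a : List (Fin n)} (h : ∃ b, IsTwoRowSSYT d a b) :
    IsTwoRowSSYT d a (phi d a) := by
  obtain ⟨b₀, h₀⟩ := h
  have ha := h₀.2.1
  have hV₀ : Valid n (Dpad n d) (cnt a) (cnt b₀) := (isTwoRow_iff ha h₀.2.2.1).mp h₀
  have hVg := valid_bg (fun i hi => dpad_zero d i hi) hV₀
  have hcd : cnt (phi d a) = Bg (Dpad n d) (cnt a) := funext (cnt_decode hVg.2.1)
  refine (isTwoRow_iff ha (decode_sorted _)).mpr ?_
  rw [show cnt (decode n (Bg (Dpad n d) (cnt a))) = Bg (Dpad n d) (cnt a) from hcd]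
  exact hVg

theorem psi_spec {b : List (Fin n)} (h : ∃ a, IsTwoRowSSYT d a b) :
    IsTwoRowSSYT d (psi d b) b := by
  obtain ⟨a₀, h₀⟩ := h
  have hb := h₀.2.2.1
  have hV₀ : Valid n (Dpad n d) (cnt a₀) (cnt b) := (isTwoRow_iff h₀.2.1 hb).mp h₀
  have hVg := valid_ag hV₀
  have hcd : cnt (psi d b) = Ag n (Dpad n d) (cnt b) := funext (cnt_decode hVg.1)
  refine (isTwoRow_iff (decode_sorted _) hb).mpr ?_
  rw [show cnt (decode n (Ag n (Dpad n d) (cnt b))) = Ag n (Dpad n d) (cnt b) from hcd]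
  exact hVg

theorem psi_phi {a : List (Fin n)} (h : ∃ b, IsTwoRowSSYT d a b) : psi d (phi d a) = a := by
  obtain ⟨b₀, h₀⟩ := h
  have ha := h₀.2.1
  have hV₀ : Valid n (Dpad n d) (cnt a) (cnt b₀) := (isTwoRow_iff ha h₀.2.2.1).mp h₀
  have hVg := valid_bg (fun i hi => dpad_zero d i hi) hV₀
  have hcd : cnt (phi d a) = Bg (Dpad n d) (cnt a) := funext (cnt_decode hVg.2.1)
  show decode n (Ag n (Dpad n d) (cnt (phi d a))) = a
  rw [hcd, funext (ag_bg (fun i hi => dpad_zero d i hi) hV₀)]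
  exact decode_cnt ha

theorem phi_psi {b : List (Fin n)} (h : ∃ a, IsTwoRowSSYT d a b) : phi d (psi d b) = b := by
  obtain ⟨a₀, h₀⟩ := h
  have hb := h₀.2.2.1
  have hV₀ : Valid n (Dpad n d) (cnt a₀) (cnt b) := (isTwoRow_iff h₀.2.1 hb).mp h₀
  have hVg := valid_ag hV₀
  have hcd : cnt (psi d b) = Ag n (Dpad n d) (cnt b) := funext (cnt_decode hVg.1)
  show decode n (Bg (Dpad n d) (cnt (psi d b))) = b
  rw [hcd, funext (bg_ag (fun i hi => dpad_zero d i hi) hV₀)]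
  exact decode_cnt hb

/-- The bijection between first rows and second rows. -/
def rowEquiv (d : Fin n → ℕ) :
    {a : List (Fin n) // ∃ b, IsTwoRowSSYT d a b} ≃
      {b : List (Fin n) // ∃ a, IsTwoRowSSYT d a b} where
  toFun x := ⟨phi d x.1, x.1, phi_spec x.2⟩
  invFun y := ⟨psi d y.1, y.1, psi_spec y.2⟩
  left_inv x := Subtype.ext (psi_phi x.2)
  right_inv y := Subtype.ext (phi_psi y.2)

end Lists

end TwoRowAux

/-- The number of sequences arising as the first row of a tableau in
`𝒯_𝐝` equals the number of sequences arising as the second row of a tableau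
in `𝒯_𝐝`. -/
theorem card_firstRows_eq_card_secondRows {n : ℕ} (d : Fin n → ℕ) :
    Nat.card {a : List (Fin n) // ∃ b, IsTwoRowSSYT d a b} =
      Nat.card {b : List (Fin n) // ∃ a, IsTwoRowSSYT d a b} :=
  Nat.card_congr (TwoRowAux.rowEquiv d)
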